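/- Let (X,d) be a metric space, M a nonempty proper closed subset of X, F : X∖M → (0,∞) a 1-Lipschitz function, and j(x,y) = (1/2)·log((1 + d(x,y)/F(x))·(1 + d(x,y)/F(y))) the generalized Gehring–Osgood metric on X∖M. Then the identity map 1 : (X∖M, d) → (X∖M, j) is a homeomorphism, and it is 1-quasiconformal: for every x ∈ X∖M, limsup_{r→0⁺} [ sup{ j(x,y) : y ∈ X∖M, d(x,y) ≤ r } / inf{ j(x,y) : y ∈ X∖M, d(x,y) ≥ r } ] ≤ 1. -/

import Mathlib

open Real Filter

/-- Generalized Gehring–Osgood function. -/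
noncomputable def jGO {X : Type*} [MetricSpace X] (F : X → ℝ) (x y : X) : ℝ :=
  (1 / 2) * Real.log ((1 + dist x y / F x) * (1 + dist x y / F y))

lemma aux_log_le {t : ℝ} (ht : 0 ≤ t) : Real.log (1 + t) ≤ t := by
  have h := Real.log_le_sub_one_of_pos (show (0:ℝ) < 1 + t by linarith)
  linarith

lemma aux_le_log {t : ℝ} (ht : 0 ≤ t) : t / (1 + t) ≤ Real.log (1 + t) := by
  have h1 : (0:ℝ) < 1 + t := by linarith
  have h := Real.log_le_sub_one_of_pos (show (0:ℝ) < (1+t)⁻¹ by positivity)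
  rw [Real.log_inv] at h
  have h2 : (1+t)⁻¹ - 1 = -(t/(1+t)) := by field_simp; ring
  rw [h2] at h; linarith

lemma jGO_nonneg {X : Type*} [MetricSpace X] {F : X → ℝ} {x y : X}
    (hx : 0 < F x) (hy : 0 < F y) : 0 ≤ jGO F x y := by
  unfold jGO
  have h1 : 0 ≤ dist x y / F x := div_nonneg dist_nonneg hx.le
  have h2 : 0 ≤ dist x y / F y := div_nonneg dist_nonneg hy.le
  have : (1:ℝ) ≤ (1 + dist x y / F x) * (1 + dist x y / F y) := by nlinarith
  have := Real.log_nonneg this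
  linarith

theorem stmt_4 {X : Type*} [MetricSpace X] (M : Set X)
    (hMclosed : IsClosed M) (hMne : M.Nonempty) (hMproper : M ≠ Set.univ)
    (F : X → ℝ) (hFpos : ∀ x ∉ M, 0 < F x)
    (hFlip : ∀ x ∉ M, ∀ y ∉ M, |F x - F y| ≤ dist x y) :
    -- the identity map `(X∖M, d) → (X∖M, j)` is a homeomorphism
    (∀ x ∉ M, ∀ u : ℕ → X, (∀ n, u n ∉ M) →
      (Tendsto (fun n => dist (u n) x) atTop (nhds 0) ↔
        Tendsto (fun n => jGO F (u n) x) atTop (nhds 0))) ∧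
    -- and it is 1-quasiconformal
    (∀ x ∉ M,
      Filter.limsup
        (fun r : ℝ =>
          sSup ((fun y => jGO F x y) '' {y | y ∉ M ∧ dist x y ≤ r}) /
          sInf ((fun y => jGO F x y) '' {y | y ∉ M ∧ r ≤ dist x y}))
        (nhdsWithin (0 : ℝ) (Set.Ioi 0)) ≤ 1) := by
  constructor
  · -- homeomorphism part
    intro x hx u hu
    have ha : 0 < F x := hFpos x hx
    constructor
    · intro h
      have hF : Tendsto (fun n => F (u n)) atTop (nhds (F x)) := by
        rw [tendsto_iff_dist_tendsto_zero]
        apply squeeze_zero (fun n => dist_nonneg) (fun n => ?_) h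
        rw [Real.dist_eq]
        exact hFlip (u n) (hu n) x hx
      have h1 : Tendsto (fun n => dist (u n) x / F (u n)) atTop (nhds 0) := by
        have := h.div hF (ne_of_gt ha)
        rw [zero_div] at this; exact this
      have h2 : Tendsto (fun n => dist (u n) x / F x) atTop (nhds 0) := by
        simpa using h.div_const (F x)
      have hprod : Tendsto (fun n => (1 + dist (u n) x / F (u n)) * (1 + dist (u n) x / F x))
          atTop (nhds 1) := by
        have hone : Tendsto (fun n => (1:ℝ) + dist (u n) x / F (u n)) atTop (nhds 1) := by
          simpa using (tendsto_const_nhds (x := (1:ℝ))).add h1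
        have htwo : Tendsto (fun n => (1:ℝ) + dist (u n) x / F x) atTop (nhds 1) := by
          simpa using (tendsto_const_nhds (x := (1:ℝ))).add h2
        simpa using hone.mul htwo
      have hlog := hprod.log (by norm_num)
      simp only [Real.log_one] at hlog
      have := hlog.const_mul (1/2 : ℝ)
      simpa [jGO] using this
    · intro h
      have hexp : Tendsto (fun n => Real.exp (2 * jGO F (u n) x)) atTop (nhds 1) := by
        have h2j : Tendsto (fun n => 2 * jGO F (u n) x) atTop (nhds 0) := by
          simpa using h.const_mul (2:ℝ)
        have := (Real.continuous_exp.tendsto 0).comp h2j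
        simpa [Function.comp_def, Real.exp_zero] using this
      have key : ∀ n, 1 + dist (u n) x / F x ≤ Real.exp (2 * jGO F (u n) x) := by
        intro n
        have hfn := hFpos _ (hu n)
        have hd1 : 0 ≤ dist (u n) x / F (u n) := div_nonneg dist_nonneg hfn.le
        have hd2 : 0 ≤ dist (u n) x / F x := div_nonneg dist_nonneg ha.le
        have heq : Real.exp (2 * jGO F (u n) x)
            = (1 + dist (u n) x / F (u n)) * (1 + dist (u n) x / F x) := by
          rw [jGO, show (2:ℝ) * ((1/2) * Real.log ((1 + dist (u n) x / F (u n)) * (1 + dist (u n) x / F x))) = Real.log ((1 + dist (u n) x / F (u n)) * (1 + dist (u n) x / F x)) by ring]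
          exact Real.exp_log (by positivity)
        rw [heq]; nlinarith
      have hsq : Tendsto (fun n => dist (u n) x / F x) atTop (nhds 0) := by
        have hsub : Tendsto (fun n => Real.exp (2 * jGO F (u n) x) - 1) atTop (nhds 0) := by
          have := hexp.sub (tendsto_const_nhds (x := (1:ℝ)))
          simpa using this
        exact squeeze_zero (fun n => div_nonneg dist_nonneg ha.le)
          (fun n => by linarith [key n]) hsub
      have := hsq.mul_const (F x)
      simp only [zero_mul] at this
      have heq : (fun n => dist (u n) x / F x * F x) = fun n => dist (u n) x := by
        funext n; field_simp
      rwa [heq] at this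
  · -- quasiconformality part
    intro x hx
    set a := F x with ha_def
    have ha : 0 < a := hFpos x hx
    set l := nhdsWithin (0:ℝ) (Set.Ioi 0) with hl
    set g : ℝ → ℝ := fun r => (1/a + 1/(a-r)) / (1/(a+r) + 1/(a+2*r)) with hg_def
    set R : ℝ → ℝ := fun r =>
      sSup ((fun y => jGO F x y) '' {y | y ∉ M ∧ dist x y ≤ r}) /
        sInf ((fun y => jGO F x y) '' {y | y ∉ M ∧ r ≤ dist x y}) with hR_def
    have hg : Tendsto g l (nhds 1) := by
      have c1 : ContinuousAt (fun r : ℝ => 1/a + 1/(a-r)) 0 := by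
        apply ContinuousAt.add continuousAt_const
        exact ContinuousAt.div continuousAt_const (continuousAt_const.sub continuousAt_id)
          (by simpa using ha.ne')
      have c2 : ContinuousAt (fun r : ℝ => 1/(a+r) + 1/(a+2*r)) 0 := by
        apply ContinuousAt.add
        · exact ContinuousAt.div continuousAt_const (continuousAt_const.add continuousAt_id)
            (by simpa using ha.ne')
        · exact ContinuousAt.div continuousAt_const
            (continuousAt_const.add (continuousAt_id.const_mul 2))
            (by simp; linarith)
      have c3 : ContinuousAt g 0 := by
        apply ContinuousAt.div c1 c2
        simp only [add_zero, mul_zero]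
        positivity
      have := c3.tendsto
      have hval : g 0 = 1 := by
        simp only [hg_def, sub_zero, add_zero, mul_zero]
        rw [div_self]
        positivity
      rw [hval] at this
      exact this.mono_left nhdsWithin_le_nhds
    have hR0 : ∀ r, 0 ≤ R r := by
      intro r
      apply div_nonneg
      · apply Real.sSup_nonneg
        rintro b ⟨y, ⟨hyM, _⟩, rfl⟩
        exact jGO_nonneg ha (hFpos y hyM)
      · apply Real.sInf_nonneg
        rintro b ⟨y, ⟨hyM, _⟩, rfl⟩
        exact jGO_nonneg ha (hFpos y hyM)
    have hev : ∀ᶠ r in l, R r ≤ g r := by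
      filter_upwards [Ioo_mem_nhdsGT_of_mem (show (0:ℝ) ∈ Set.Ico 0 a from ⟨le_refl _, ha⟩)]
        with r hr
      obtain ⟨hr0, hra⟩ := hr
      have har : 0 < a - r := by linarith
      have hgpos : 0 < g r := by
        apply div_pos
        · have := one_div_pos.mpr ha
          have := one_div_pos.mpr har
          linarith
        · have h1 : (0:ℝ) < a + r := by linarith
          have h2 : (0:ℝ) < a + 2*r := by linarith
          have := one_div_pos.mpr h1
          have := one_div_pos.mpr h2
          linarith
      -- upper bound for the sup
      set U : ℝ := (1/2) * (r/a + r/(a-r)) with hU_def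
      have hUnn : 0 ≤ U := by positivity
      have hsup : sSup ((fun y => jGO F x y) '' {y | y ∉ M ∧ dist x y ≤ r}) ≤ U := by
        apply csSup_le
        · exact ⟨jGO F x x, ⟨x, ⟨hx, by simp [hr0.le]⟩, rfl⟩⟩
        · rintro b ⟨y, ⟨hyM, hyd⟩, rfl⟩
          have hFy : 0 < F y := hFpos y hyM
          have hd0 : 0 ≤ dist x y := dist_nonneg
          have hFy2 : a - r ≤ F y := by
            have := abs_le.mp (hFlip x hx y hyM)
            linarith [this.2, hyd]
          have l1 : Real.log (1 + dist x y / a) ≤ r / a := by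
            refine le_trans (aux_log_le (by positivity)) ?_
            exact div_le_div₀ hr0.le hyd ha le_rfl
          have l2 : Real.log (1 + dist x y / F y) ≤ r / (a - r) := by
            refine le_trans (aux_log_le (by positivity)) ?_
            exact div_le_div₀ hr0.le hyd har hFy2
          have hx1 : (0:ℝ) < 1 + dist x y / a := by positivity
          have hx2 : (0:ℝ) < 1 + dist x y / F y := by positivity
          show (1/2) * Real.log ((1 + dist x y / a) * (1 + dist x y / F y)) ≤ U
          rw [Real.log_mul hx1.ne' hx2.ne']
          rw [hU_def]; linarith
      set Lb : ℝ := (1/2) * (r/(a+r) + r/(a+2*r)) with hLb_def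
      have hLbpos : 0 < Lb := by positivity
      by_cases hne : ({y | y ∉ M ∧ r ≤ dist x y} : Set X).Nonempty
      · have hinf : Lb ≤ sInf ((fun y => jGO F x y) '' {y | y ∉ M ∧ r ≤ dist x y}) := by
          apply le_csInf (hne.image _)
          rintro b ⟨y, ⟨hyM, hyd⟩, rfl⟩
          have hFy : 0 < F y := hFpos y hyM
          have hd0 : 0 ≤ dist x y := dist_nonneg
          have hrd : r ≤ dist x y := hyd
          have hFy2 : F y ≤ a + dist x y := by
            have := abs_le.mp (hFlip x hx y hyM)
            linarith [this.1]
          have l1 : r / (a + r) ≤ Real.log (1 + dist x y / a) := by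
            have s1 : r/(a+r) = (r/a) / (1 + r/a) := by
              field_simp
            rw [s1]
            refine le_trans (aux_le_log (by positivity)) ?_
            apply Real.log_le_log (by positivity)
            have : r / a ≤ dist x y / a := by gcongr
            linarith
          have l2 : r / (a + 2*r) ≤ Real.log (1 + dist x y / F y) := by
            have s1 : r/(a+2*r) = (r/(a+r)) / (1 + r/(a+r)) := by
              have h1 : (0:ℝ) < a + r := by linarith
              have h2 : (0:ℝ) < a + 2*r := by linarith
              rw [eq_div_iff (by positivity : ((1:ℝ) + r/(a+r)) ≠ 0)]
              field_simp
              ring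
            rw [s1]
            refine le_trans (aux_le_log (by positivity)) ?_
            apply Real.log_le_log (by positivity)
            have step1 : r/(a+r) ≤ dist x y / (a + dist x y) := by
              rw [div_le_div_iff₀ (by linarith) (by linarith)]
              nlinarith
            have step2 : dist x y / (a + dist x y) ≤ dist x y / F y :=
              div_le_div₀ hd0 le_rfl hFy hFy2
            linarith
          have hx1 : (0:ℝ) < 1 + dist x y / a := by positivity
          have hx2 : (0:ℝ) < 1 + dist x y / F y := by positivity
          show Lb ≤ (1/2) * Real.log ((1 + dist x y / a) * (1 + dist x y / F y))
          rw [Real.log_mul hx1.ne' hx2.ne', hLb_def]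
          linarith
        have hRle : R r ≤ U / Lb :=
          div_le_div₀ hUnn hsup hLbpos hinf
        have heq : U / Lb = g r := by
          rw [show U = (r/2) * (1/a + 1/(a-r)) by rw [hU_def]; ring,
            show Lb = (r/2) * (1/(a+r) + 1/(a+2*r)) by rw [hLb_def]; ring,
            mul_div_mul_left _ _ (show (r:ℝ)/2 ≠ 0 by positivity)]
        rw [heq] at hRle
        exact hRle
      · have hempty : ({y | y ∉ M ∧ r ≤ dist x y} : Set X) = ∅ :=
          Set.not_nonempty_iff_eq_empty.mp hne
        have : R r = 0 := by
          rw [hR_def]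
          simp only [hempty, Set.image_empty, Real.sInf_empty, div_zero]
        rw [this]
        exact hgpos.le
    have hbdd : IsBoundedUnder (· ≤ ·) l g := hg.isBoundedUnder_le
    have hb : IsBoundedUnder (· ≥ ·) l R := isBoundedUnder_of ⟨0, fun r => hR0 r⟩
    have hcob : IsCoboundedUnder (· ≤ ·) l R := hb.isCoboundedUnder_le
    calc Filter.limsup R l ≤ Filter.limsup g l := Filter.limsup_le_limsup hev hcob hbdd
      _ = 1 := hg.limsup_eq
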